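/- The function b ↦ (1-b)²·((3/4)b + √(b(1-b))) is increasing on (0, 1/5]. -/

import Mathlib

theorem stmt_15 :
    StrictMonoOn (fun b : ℝ => (1-b)^2 * ((3/4)*b + Real.sqrt (b*(1-b))))
      (Set.Ioc 0 (1/5)) := by
  have hconv : Convex ℝ (Set.Ioc (0:ℝ) (1/5)) := convex_Ioc _ _
  have hcont : ContinuousOn (fun b : ℝ => (1-b)^2 * ((3/4)*b + Real.sqrt (b*(1-b))))
      (Set.Ioc (0:ℝ) (1/5)) := by
    apply Continuous.continuousOn
    fun_prop
  apply strictMonoOn_of_deriv_pos hconv hcont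
  intro x hx
  rw [interior_Ioc] at hx
  obtain ⟨hx0, hx5⟩ := hx
  have hx1 : x < 1 := by linarith
  have hprod : 0 < x * (1-x) := by nlinarith
  set s := Real.sqrt (x*(1-x)) with hs
  have hspos : 0 < s := Real.sqrt_pos.mpr hprod
  have hssq : s^2 = x*(1-x) := Real.sq_sqrt hprod.le
  have hg : HasDerivAt (fun b : ℝ => b*(1-b)) (1 - 2*x) x := by
    have := (hasDerivAt_id x).mul ((hasDerivAt_const x (1:ℝ)).sub (hasDerivAt_id x))
    exact this.congr_deriv (by simp only [Pi.sub_apply, id]; ring)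
  have hsqrt : HasDerivAt (fun b : ℝ => Real.sqrt (b*(1-b))) ((1-2*x)/(2*s)) x := by
    have := (Real.hasDerivAt_sqrt (ne_of_gt hprod)).comp x hg
    exact this.congr_deriv (by rw [hs]; ring)
  have hinner : HasDerivAt (fun b : ℝ => (3/4)*b + Real.sqrt (b*(1-b)))
      (3/4 + (1-2*x)/(2*s)) x := by
    have h34 : HasDerivAt (fun b : ℝ => (3/4)*b) (3/4) x := by
      have := (hasDerivAt_id x).const_mul (3/4 : ℝ)
      exact this.congr_deriv (by ring)
    exact h34.add hsqrt
  have houter : HasDerivAt (fun b : ℝ => (1-b)^2) (-2*(1-x)) x := by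
    have := ((hasDerivAt_const x (1:ℝ)).sub (hasDerivAt_id x)).pow 2
    exact this.congr_deriv (by simp only [Pi.sub_apply, id]; norm_num)
  have hf : HasDerivAt (fun b : ℝ => (1-b)^2 * ((3/4)*b + Real.sqrt (b*(1-b))))
      ((-2*(1-x)) * ((3/4)*x + s) + (1-x)^2 * (3/4 + (1-2*x)/(2*s))) x :=
    houter.mul hinner
  rw [hf.deriv]
  have h1x : 0 < 1 - x := by linarith
  have key : 0 < (3/2)*s*(1-3*x) + (1-x)*(1-6*x) := by
    rcases le_or_gt (1-6*x) 0 with hc | hc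
    · -- x > 1/6 case: need squared comparison
      have hb : 0 < (1-x)*(6*x-1) ∨ (1-x)*(6*x-1) = 0 := by
        rcases lt_or_eq_of_le hc with h | h
        · left; nlinarith
        · right; nlinarith
      have ha : 0 < (3/2)*s*(1-3*x) := by
        have : 0 < 1 - 3*x := by linarith
        positivity
      have hsq : ((3/2)*s*(1-3*x))^2 > ((1-x)*(6*x-1))^2 := by
        have : ((3/2)*s*(1-3*x))^2 = (9/4)*(1-3*x)^2*(x*(1-x)) := by
          rw [← hssq]; ring
        rw [this]
        nlinarith [sq_nonneg (x - 1/5), sq_nonneg (x - 1/6)]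
      nlinarith [ha, hsq]
    · have : 0 < 1 - 3*x := by linarith
      nlinarith [mul_pos hspos this]
  have h2s : (0:ℝ) < 2*s := by positivity
  have hE : (-2*(1-x)) * ((3/4)*x + s) + (1-x)^2 * (3/4 + (1-2*x)/(2*s))
      = (1-x) * ((3/2)*s*(1-3*x) + (1-x)*(1-6*x)) / (2*s) := by
    field_simp
    ring_nf
    nlinarith [hssq]
  rw [hE]
  exact div_pos (mul_pos h1x key) h2s
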